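/- For all x ≤ x₀ and all n ∈ ℕ: |g_n(x)| ≤ n! · |g_1(x)|^n. -/

import Mathlib

open MeasureTheory Set Finset

/-- The jump of `g` at `x`: `Δg(x) = g(x⁺) − g(x)`. -/
noncomputable def jumpOf (g : ℝ → ℝ) (x : ℝ) : ℝ := Function.rightLim g x - g x

/-- Oriented Lebesgue–Stieltjes integral: `∫_a^b f dμ = ∫_{[a,b)} f dμ` if `a ≤ b`,
`= −∫_{[b,a)} f dμ` otherwise. -/
noncomputable def ointeg (μ : MeasureTheory.Measure ℝ) (f : ℝ → ℝ) (a b : ℝ) : ℝ :=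
  if a ≤ b then ∫ s in Set.Ico a b, f s ∂μ else - ∫ s in Set.Ico b a, f s ∂μ

/-- The `g`-monomials centered at `c`, defined from the Lebesgue–Stieltjes measure `μ` of `g`:
`g_0 ≡ 1`, `g_{n+1}(x) = (n+1) ∫_c^x g_n dμ` (oriented). -/
noncomputable def gMon (μ : MeasureTheory.Measure ℝ) (c : ℝ) : ℕ → ℝ → ℝ
  | 0 => fun _ => 1
  | n + 1 => fun x => ((n : ℝ) + 1) * ointeg μ (gMon μ c n) c x


/-- For `x ≤ x₀` and all `n ∈ ℕ`: `|g_n(x)| ≤ n! · |g_1(x)|^n`. -/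
theorem stmt5 (g : ℝ → ℝ) (μ : MeasureTheory.Measure ℝ) (x₀ : ℝ)
    (hg : Monotone g) (hlc : ∀ x : ℝ, ContinuousWithinAt g (Set.Iio x) x)
    (hμ : ∀ a b : ℝ, a ≤ b → μ (Set.Ico a b) = ENNReal.ofReal (g b - g a)) :
    ∀ x : ℝ, x ≤ x₀ → ∀ n : ℕ,
      |gMon μ x₀ n x| ≤ (Nat.factorial n : ℝ) * |gMon μ x₀ 1 x| ^ n := by
  -- first: an expression for ointeg when x ≤ x₀
  have hoi : ∀ (f : ℝ → ℝ) (x : ℝ), x ≤ x₀ →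
      ointeg μ f x₀ x = - ∫ s in Set.Ico x x₀, f s ∂μ := by
    intro f x hx
    unfold ointeg
    rcases lt_or_eq_of_le hx with h | h
    · rw [if_neg (not_le.mpr h)]
    · subst h; simp
  -- value of gMon 1
  have hg1 : ∀ x : ℝ, x ≤ x₀ → gMon μ x₀ 1 x = -(g x₀ - g x) := by
    intro x hx
    simp only [gMon, hoi _ x hx, Nat.cast_zero]
    rw [setIntegral_const, measureReal_def, hμ x x₀ hx, ENNReal.toReal_ofReal (by linarith [hg hx]), smul_eq_mul]
    ring
  have hg1abs : ∀ x : ℝ, x ≤ x₀ → |gMon μ x₀ 1 x| = g x₀ - g x := by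
    intro x hx
    rw [hg1 x hx, abs_neg, abs_of_nonneg (by linarith [hg hx])]
  intro x hx n
  induction n generalizing x with
  | zero => simp [gMon]
  | succ n ih =>
    have hμfin : μ (Set.Ico x x₀) ≠ ⊤ := by
      rw [hμ x x₀ hx]; exact ENNReal.ofReal_ne_top
    have hfin : IsFiniteMeasure (μ.restrict (Set.Ico x x₀)) :=
      ⟨by rw [Measure.restrict_apply_univ]; exact lt_top_iff_ne_top.mpr hμfin⟩
    have hbound : ∀ᵐ t ∂(μ.restrict (Set.Ico x x₀)),
        ‖gMon μ x₀ n t‖ ≤ (Nat.factorial n : ℝ) * |gMon μ x₀ 1 x| ^ n := by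
      refine (ae_restrict_iff' measurableSet_Ico).mpr (ae_of_all _ ?_)
      intro t ht
      have ht0 : t ≤ x₀ := le_of_lt ht.2
      calc ‖gMon μ x₀ n t‖ ≤ (Nat.factorial n : ℝ) * |gMon μ x₀ 1 t| ^ n := ih t ht0
        _ ≤ (Nat.factorial n : ℝ) * |gMon μ x₀ 1 x| ^ n := by
            have : |gMon μ x₀ 1 t| ≤ |gMon μ x₀ 1 x| := by
              rw [hg1abs t ht0, hg1abs x hx]
              linarith [hg ht.1]
            exact mul_le_mul_of_nonneg_left
              (pow_le_pow_left₀ (abs_nonneg _) this n)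
              (by positivity)
    have hint : ‖∫ t in Set.Ico x x₀, gMon μ x₀ n t ∂μ‖ ≤
        ((Nat.factorial n : ℝ) * |gMon μ x₀ 1 x| ^ n) *
          (μ.restrict (Set.Ico x x₀) Set.univ).toReal :=
      norm_integral_le_of_norm_le_const hbound
    rw [Measure.restrict_apply_univ, hμ x x₀ hx,
      ENNReal.toReal_ofReal (by linarith [hg hx])] at hint
    have hgx : g x₀ - g x = |gMon μ x₀ 1 x| := (hg1abs x hx).symm
    rw [hgx] at hint
    show |((n:ℝ) + 1) * ointeg μ (gMon μ x₀ n) x₀ x| ≤ _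
    rw [hoi _ x hx, abs_mul, abs_neg, abs_of_nonneg (by positivity : (0:ℝ) ≤ (n:ℝ)+1)]
    calc ((n:ℝ) + 1) * |∫ t in Set.Ico x x₀, gMon μ x₀ n t ∂μ|
        ≤ ((n:ℝ) + 1) * ((Nat.factorial n : ℝ) * |gMon μ x₀ 1 x| ^ n * |gMon μ x₀ 1 x|) := by
          exact mul_le_mul_of_nonneg_left hint (by positivity)
      _ = (Nat.factorial (n+1) : ℝ) * |gMon μ x₀ 1 x| ^ (n+1) := by
          rw [Nat.factorial_succ]
          push_cast
          ring
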